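/- arXiv:1108.1288 — 2 statements merged into one kernel-verified Lean document; each statement's English description precedes it below -/
import Mathlib

section
/- For indices with i ≠ σ(j), i ≠ j, and a, b ∈ R, the symplectic elementary generators satisfy the commutator relation [se_{ij}(a), se_{j,σ(i)}(b)] = se_{i,σ(i)}(2ab). -/
open Matrix

/-- The involution `σ` pairing `2i-1 ↔ 2i` (in 0-indexed form: `2i ↔ 2i+1`).
For even `m` this is exactly the permutation `σ(2i)=2i-1, σ(2i-1)=2i` of the paper. -/
def sesig {m : ℕ} (k : Fin m) : Fin m :=
  if h : (k : ℕ) % 2 = 0 ∧ (k : ℕ) + 1 < m then ⟨(k : ℕ) + 1, h.2⟩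
  else ⟨(k : ℕ) - 1, by have := k.2; omega⟩

/-- The elementary symplectic generator `se_{ij}(z)`. -/
def se {m : ℕ} {R : Type*} [CommRing R] (i j : Fin m) (z : R) :
    Matrix (Fin m) (Fin m) R :=
  if i = sesig j then 1 + Matrix.single i j z
  else 1 + Matrix.single i j z
    - (-1 : R) ^ ((i : ℕ) + (j : ℕ)) • Matrix.single (sesig j) (sesig i) z

/-- The standard symplectic form `ψₙ = Σ e_{2i-1,2i} - Σ e_{2i,2i-1}`. -/
def psi {m : ℕ} (R : Type*) [CommRing R] : Matrix (Fin m) (Fin m) R :=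
  Matrix.of fun k l => if l = sesig k then (if (k : ℕ) % 2 = 0 then 1 else -1) else 0

lemma sesig_val {n : ℕ} (k : Fin (2 * n)) :
    ((sesig k : Fin (2 * n)) : ℕ) = if (k : ℕ) % 2 = 0 then (k : ℕ) + 1 else (k : ℕ) - 1 := by
  unfold sesig
  have hk := k.2
  split_ifs with h1 h2 h3 <;> simp_all <;> omega

lemma sesig_sesig {n : ℕ} (k : Fin (2 * n)) : sesig (sesig k) = k := by
  have h1 := sesig_val k
  have h2 := sesig_val (sesig k)
  have hk := k.2
  have hs := (sesig k).2
  apply Fin.ext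
  split_ifs at h1 h2 <;> omega

lemma sesig_ne {n : ℕ} (k : Fin (2 * n)) : sesig k ≠ k := by
  have h1 := sesig_val k
  have hk := k.2
  intro h
  rw [h] at h1
  split_ifs at h1 <;> omega

lemma sesig_parity {n : ℕ} (k : Fin (2 * n)) :
    ((sesig k : Fin (2 * n)) : ℕ) % 2 ≠ (k : ℕ) % 2 := by
  have h1 := sesig_val k
  have hk := k.2
  split_ifs at h1 <;> omega

lemma neg_one_pow_odd_sum {R : Type*} [CommRing R] {p q : ℕ} (h : (p + q) % 2 = 1) :
    (-1 : R) ^ p = -(-1 : R) ^ q := by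
  rcases Nat.even_or_odd p with hp | hp
  · rw [Nat.even_iff] at hp
    rw [(Nat.even_iff.2 hp : Even p).neg_one_pow,
      (Nat.odd_iff.2 (by omega) : Odd q).neg_one_pow]
    ring
  · rw [Nat.odd_iff] at hp
    rw [(Nat.odd_iff.2 hp : Odd p).neg_one_pow,
      (Nat.even_iff.2 (by omega) : Even q).neg_one_pow]

lemma comm_aux {S : Type*} [Ring S] (x y p : S)
    (hx : x * x = 0) (hy : y * y = 0) (hxy : x * y = p) (hyx : y * x = -p)
    (hxp : x * p = 0) (hpx : p * x = 0) (hyp : y * p = 0) (hpy : p * y = 0)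
    (hpp : p * p = 0) :
    (1 + x) * (1 + y) * (1 - x) * (1 - y) = 1 + p + p := by
  simp only [mul_add, add_mul, mul_sub, sub_mul, mul_one, one_mul, hx, hy, hxy, hyx,
    hxp, hpx, hyp, hpy, hpp, mul_neg, neg_mul, mul_zero, zero_mul, add_zero, zero_add,
    neg_zero, sub_zero, neg_neg]
  abel


/-- `[se_{ij}(a), se_{j,σ(i)}(b)] = se_{i,σ(i)}(2ab)` for `i ≠ σ(j)`, `i ≠ j`. -/
theorem se_commutator_rel12 {n : ℕ} {R : Type*} [CommRing R]
    (i j : Fin (2 * n)) (hij : i ≠ j) (hisj : i ≠ sesig j) (a b : R)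
    (u v : (Matrix (Fin (2 * n)) (Fin (2 * n)) R)ˣ)
    (hu : (u : Matrix (Fin (2 * n)) (Fin (2 * n)) R) = se i j a)
    (hv : (v : Matrix (Fin (2 * n)) (Fin (2 * n)) R) = se j (sesig i) b) :
    ((u * v * u⁻¹ * v⁻¹ : (Matrix (Fin (2 * n)) (Fin (2 * n)) R)ˣ) :
        Matrix (Fin (2 * n)) (Fin (2 * n)) R) = se i (sesig i) (2 * a * b) := by
  set si := sesig i with hsi
  set sj := sesig j with hsj
  have hji : j ≠ i := hij.symm
  have hsji : sj ≠ i := fun h => hisj h.symm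
  have hjsi : j ≠ si := by
    intro h
    exact hisj (by rw [hsj, h, hsi, sesig_sesig])
  have hsij : si ≠ j := fun h => hjsi h.symm
  have hsii : si ≠ i := sesig_ne i
  have hisi : i ≠ si := hsii.symm
  have hsjj : sj ≠ j := sesig_ne j
  have hjsj : j ≠ sj := hsjj.symm
  have hsisj : si ≠ sj := by
    intro h
    exact hij (by rw [← sesig_sesig i, ← hsi, h, hsj, sesig_sesig])
  -- the sign
  set ε : R := (-1 : R) ^ ((i : ℕ) + (j : ℕ)) with hε
  have hε2 : (-1 : R) ^ ((j : ℕ) + ((si : Fin (2 * n)) : ℕ)) = -ε := by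
    apply neg_one_pow_odd_sum
    have := sesig_parity i
    rw [← hsi] at this
    omega
  have hεε : ε * ε = 1 := by
    rw [hε, ← pow_add]
    exact Even.neg_one_pow ⟨(i : ℕ) + (j : ℕ), rfl⟩
  -- the pieces
  set X : Matrix (Fin (2 * n)) (Fin (2 * n)) R :=
    single i j a - ε • single sj si a with hX
  set Y : Matrix (Fin (2 * n)) (Fin (2 * n)) R :=
    single j si b + ε • single i sj b with hY
  set P : Matrix (Fin (2 * n)) (Fin (2 * n)) R := single i si (a * b) with hP
  have hu' : (u : Matrix (Fin (2 * n)) (Fin (2 * n)) R) = 1 + X := by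
    rw [hu, se, if_neg hisj, hX, ← hsj, ← hsi, ← hε, add_sub_assoc]
  have hv' : (v : Matrix (Fin (2 * n)) (Fin (2 * n)) R) = 1 + Y := by
    have hc : ¬ j = sesig (sesig i) := by rw [sesig_sesig]; exact hji
    rw [hv, se, if_neg hc, sesig_sesig, ← hsj, hε2, hY, neg_smul, sub_neg_eq_add,
      add_assoc]
  have hres : se i si (2 * a * b) = 1 + P + P := by
    have h2 : 2 * a * b = a * b + (a * b) := by ring
    rw [se, if_pos (by rw [hsi, sesig_sesig]), hP, h2, single_add, add_assoc]
  -- multiplication relations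
  have hXX : X * X = 0 := by
    rw [hX]
    simp only [mul_sub, sub_mul, smul_mul_assoc, mul_smul_comm,
      single_mul_single_of_ne (h := hji) .., single_mul_single_of_ne (h := hjsj) ..,
      single_mul_single_of_ne (h := hsii) .., single_mul_single_of_ne (h := hsisj) ..,
      smul_zero, sub_zero, zero_sub, neg_zero]
  have hYY : Y * Y = 0 := by
    rw [hY]
    simp only [mul_add, add_mul, smul_mul_assoc, mul_smul_comm,
      single_mul_single_of_ne (h := hsij) .., single_mul_single_of_ne (h := hsii) ..,
      single_mul_single_of_ne (h := hsjj) .., single_mul_single_of_ne (h := hsji) ..,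
      smul_zero, add_zero, zero_add]
  have hXY : X * Y = P := by
    rw [hX, hY, hP]
    simp only [mul_add, sub_mul, smul_mul_assoc, mul_smul_comm,
      single_mul_single_same, single_mul_single_of_ne (h := hji) ..,
      single_mul_single_of_ne (h := hsij) .., single_mul_single_of_ne (h := hsii) ..,
      smul_zero, add_zero, zero_add, sub_zero, zero_sub, neg_zero]
  have hYX : Y * X = -P := by
    rw [hX, hY, hP]
    simp only [mul_sub, add_mul, smul_mul_assoc, mul_smul_comm,
      single_mul_single_same, single_mul_single_of_ne (h := hsii) ..,
      single_mul_single_of_ne (h := hsisj) .., single_mul_single_of_ne (h := hsji) ..,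
      smul_zero, sub_zero, zero_sub, add_zero, zero_add, smul_smul, hεε, one_smul]
    rw [mul_comm b a]
  have hXP : X * P = 0 := by
    rw [hX, hP]
    simp only [sub_mul, smul_mul_assoc,
      single_mul_single_of_ne (h := hji) .., single_mul_single_of_ne (h := hsii) ..,
      smul_zero, sub_zero, zero_sub, neg_zero]
  have hPX : P * X = 0 := by
    rw [hX, hP]
    simp only [mul_sub, mul_smul_comm,
      single_mul_single_of_ne (h := hsii) .., single_mul_single_of_ne (h := hsisj) ..,
      smul_zero, sub_zero, zero_sub, neg_zero]
  have hYP : Y * P = 0 := by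
    rw [hY, hP]
    simp only [add_mul, smul_mul_assoc,
      single_mul_single_of_ne (h := hsii) .., single_mul_single_of_ne (h := hsji) ..,
      smul_zero, add_zero, zero_add]
  have hPY : P * Y = 0 := by
    rw [hY, hP]
    simp only [mul_add, mul_smul_comm,
      single_mul_single_of_ne (h := hsij) .., single_mul_single_of_ne (h := hsii) ..,
      smul_zero, add_zero, zero_add]
  have hPP : P * P = 0 := by
    rw [hP]
    exact single_mul_single_of_ne (h := hsii) ..
  -- inverses
  have hXmul : (1 + X) * (1 - X) = 1 := by
    have h : (1 + X) * (1 - X) = 1 - X * X := by noncomm_ring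
    rw [h, hXX, sub_zero]
  have hYmul : (1 + Y) * (1 - Y) = 1 := by
    have h : (1 + Y) * (1 - Y) = 1 - Y * Y := by noncomm_ring
    rw [h, hYY, sub_zero]
  have huinv : ((u⁻¹ : (Matrix (Fin (2 * n)) (Fin (2 * n)) R)ˣ) :
      Matrix (Fin (2 * n)) (Fin (2 * n)) R) = 1 - X := by
    calc (↑u⁻¹ : Matrix (Fin (2 * n)) (Fin (2 * n)) R)
        = ↑u⁻¹ * ((1 + X) * (1 - X)) := by rw [hXmul, mul_one]
      _ = (↑u⁻¹ * ↑u) * (1 - X) := by rw [← mul_assoc, hu']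
      _ = 1 - X := by rw [u.inv_mul, one_mul]
  have hvinv : ((v⁻¹ : (Matrix (Fin (2 * n)) (Fin (2 * n)) R)ˣ) :
      Matrix (Fin (2 * n)) (Fin (2 * n)) R) = 1 - Y := by
    calc (↑v⁻¹ : Matrix (Fin (2 * n)) (Fin (2 * n)) R)
        = ↑v⁻¹ * ((1 + Y) * (1 - Y)) := by rw [hYmul, mul_one]
      _ = (↑v⁻¹ * ↑v) * (1 - Y) := by rw [← mul_assoc, hv']
      _ = 1 - Y := by rw [v.inv_mul, one_mul]
  rw [Units.val_mul, Units.val_mul, Units.val_mul, hu', hv', huinv, hvinv, hres]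
  exact comm_aux X Y P hXX hYY hXY hYX hXP hPX hYP hPY hPP
end

section
/- Over a local ring R, every unimodular row v ∈ Umₙ(R, I) (i.e., v ≡ e₁ mod I) satisfies v = e₁·β for some β ∈ Eₙ(R, I). -/
open Matrix

set_option maxHeartbeats 1000000
set_option synthInstance.maxHeartbeats 200000

/-- The subgroup of `GL_n(R)` generated by the elementary matrices `I + z·e_{ij}`
with `z ∈ S`, `i ≠ j`. -/
def elemSub {m : ℕ} {R : Type*} [CommRing R] (S : Set R) :
    Subgroup (Matrix (Fin m) (Fin m) R)ˣ :=
  Subgroup.closure {u | ∃ i j, ∃ z ∈ S, i ≠ j ∧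
    (u : Matrix (Fin m) (Fin m) R) = 1 + Matrix.single i j z}

/-- The relative elementary group `E_n(R, I)`: the normal closure of `E_n(I)` in `E_n(R)`. -/
def elemRel {m : ℕ} {R : Type*} [CommRing R] (I : Ideal R) :
    Subgroup (Matrix (Fin m) (Fin m) R)ˣ :=
  Subgroup.closure {x | ∃ g ∈ elemSub (m := m) (Set.univ : Set R),
    ∃ h ∈ elemSub (m := m) (I : Set R), x = g * h * g⁻¹}

section Aux

variable {m : ℕ} {R : Type*} [CommRing R]

theorem vecMul_std (w : Fin m → R) (i j : Fin m) (z : R) :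
    Matrix.vecMul w (Matrix.single i j z) = (w i * z) • (Pi.single j 1 : Fin m → R) := by
  funext k
  simp only [Matrix.vecMul, dotProduct, Matrix.single, Matrix.of_apply,
    Pi.smul_apply, Pi.single_apply, smul_eq_mul, mul_ite, mul_one, mul_zero, ite_and]
  by_cases h : j = k
  · subst h; simp [mul_comm]
  · simp [h, Ne.symm h]

/-- The elementary matrix `1 + z e_{ij}` as a unit. -/
def elemMat (i j : Fin m) (hij : i ≠ j) (z : R) : (Matrix (Fin m) (Fin m) R)ˣ where
  val := 1 + Matrix.single i j z
  inv := 1 + Matrix.single i j (-z)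
  val_inv := by
    have h0 : Matrix.single i j z * Matrix.single i j (-z) = 0 :=
      Matrix.single_mul_single_of_ne i j i (c := z) hij.symm (-z)
    have h1 : Matrix.single i j z + Matrix.single i j (-z) = 0 := by
      rw [← Matrix.single_add]; simp
    rw [mul_add, mul_one, add_mul, one_mul, h0, add_zero, add_assoc, h1, add_zero]
  inv_val := by
    have h0 : Matrix.single i j (-z) * Matrix.single i j z = 0 :=
      Matrix.single_mul_single_of_ne i j i (c := -z) hij.symm z
    have h1 : Matrix.single i j (-z) + Matrix.single i j z = 0 := by
      rw [← Matrix.single_add]; simp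
    rw [mul_add, mul_one, add_mul, one_mul, h0, add_zero, add_assoc, h1, add_zero]

theorem elemMat_inv (i j : Fin m) (hij : i ≠ j) (z : R) :
    (elemMat i j hij z)⁻¹ = elemMat i j hij (-z) := by
  ext : 1
  rfl

theorem elemMat_mem {S : Set R} {z : R} (i j : Fin m) (hij : i ≠ j) (hz : z ∈ S) :
    elemMat i j hij z ∈ elemSub S :=
  Subgroup.subset_closure ⟨i, j, z, hz, hij, rfl⟩

theorem vecMul_elemMat (w : Fin m → R) (i j : Fin m) (hij : i ≠ j) (z : R) :
    Matrix.vecMul w ((elemMat i j hij z : (Matrix (Fin m) (Fin m) R)ˣ) :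
      Matrix (Fin m) (Fin m) R) = w + (w i * z) • (Pi.single j 1 : Fin m → R) := by
  show Matrix.vecMul w (1 + Matrix.single i j z) = _
  rw [Matrix.vecMul_add, Matrix.vecMul_one, vecMul_std]

theorem elemSub_le_elemRel (I : Ideal R) :
    elemSub (m := m) (I : Set R) ≤ elemRel I := by
  rw [elemSub, Subgroup.closure_le]
  intro u hu
  exact Subgroup.subset_closure ⟨1, one_mem _, u, Subgroup.subset_closure hu, by simp⟩

theorem conj_mem_elemRel (I : Ideal R) {g h : (Matrix (Fin m) (Fin m) R)ˣ}
    (hg : g ∈ elemSub (m := m) (Set.univ : Set R)) (hh : h ∈ elemSub (m := m) (I : Set R)) :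
    g * h * g⁻¹ ∈ elemRel I :=
  Subgroup.subset_closure ⟨g, hg, h, hh, rfl⟩

/-- Product of elementary matrices in row `i0`, indexed by a list. -/
def elemRowL (i0 : Fin m) (c : Fin m → R) (l : List (Fin m)) : (Matrix (Fin m) (Fin m) R)ˣ :=
  (l.map fun j => if h : j = i0 then 1 else elemMat i0 j (fun e => h e.symm) (c j)).prod

theorem elemRowL_mem {S : Set R} (i0 : Fin m) (c : Fin m → R) (l : List (Fin m))
    (hc : ∀ j, j ≠ i0 → c j ∈ S) : elemRowL i0 c l ∈ elemSub S := by
  refine Subgroup.list_prod_mem _ fun x hx => ?_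
  obtain ⟨j, _, rfl⟩ := List.mem_map.1 hx
  by_cases h : j = i0
  · rw [dif_pos h]; exact one_mem _
  · rw [dif_neg h]; exact elemMat_mem _ _ _ (hc j h)

theorem vecMul_elemRowL (i0 : Fin m) (c : Fin m → R) :
    ∀ (l : List (Fin m)), l.Nodup → i0 ∉ l → ∀ w : Fin m → R,
    Matrix.vecMul w ((elemRowL i0 c l : (Matrix (Fin m) (Fin m) R)ˣ) :
      Matrix (Fin m) (Fin m) R) =
      fun k => if k ∈ l then w k + w i0 * c k else w k := by
  intro l
  induction l with
  | nil =>
    intro _ _ w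
    simp [elemRowL, Matrix.vecMul_one]
  | cons j t ih =>
    intro hnd hi0 w
    have hji0 : j ≠ i0 := fun e => hi0 (e ▸ List.mem_cons_self)
    have hjt : j ∉ t := (List.nodup_cons.1 hnd).1
    have h1 : elemRowL i0 c (j :: t) =
        elemMat i0 j (fun e => hji0 e.symm) (c j) * elemRowL i0 c t := by
      rw [elemRowL, List.map_cons, List.prod_cons, dif_neg hji0]
      rfl
    rw [h1, Units.val_mul, ← Matrix.vecMul_vecMul, vecMul_elemMat]
    set w' : Fin m → R := w + (w i0 * c j) • (Pi.single j 1 : Fin m → R) with hw'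
    rw [ih (List.nodup_cons.1 hnd).2 (fun h => hi0 (List.mem_cons_of_mem _ h)) w']
    have hw'i0 : w' i0 = w i0 := by
      simp [hw', Pi.single_eq_of_ne (Ne.symm hji0)]
    funext k
    by_cases hkj : k = j
    · subst hkj
      simp [hjt, hw', hw'i0, List.mem_cons]
    · have hw'k : w' k = w k := by
        simp [hw', Pi.single_eq_of_ne hkj]
      by_cases hkt : k ∈ t <;>
        simp [hkt, hkj, hw'k, hw'i0, List.mem_cons]

/-- Product of elementary matrices in row `i0` over all `j ≠ i0`. -/
noncomputable def elemRow (i0 : Fin m) (c : Fin m → R) : (Matrix (Fin m) (Fin m) R)ˣ :=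
  elemRowL i0 c (Finset.univ.erase i0).toList

theorem elemRow_mem {S : Set R} (i0 : Fin m) (c : Fin m → R)
    (hc : ∀ j, j ≠ i0 → c j ∈ S) : elemRow i0 c ∈ elemSub S :=
  elemRowL_mem _ _ _ hc

theorem vecMul_elemRow (w : Fin m → R) (i0 : Fin m) (c : Fin m → R) :
    Matrix.vecMul w ((elemRow i0 c : (Matrix (Fin m) (Fin m) R)ˣ) :
      Matrix (Fin m) (Fin m) R) =
      fun k => if k = i0 then w i0 else w k + w i0 * c k := by
  rw [elemRow, vecMul_elemRowL i0 c _ (Finset.nodup_toList _)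
    (by simp) w]
  funext k
  by_cases hk : k = i0 <;> simp [hk, Finset.mem_toList]

end Aux

/-- Over a local ring, every unimodular row `v ∈ Um_n(R, I)` (i.e. `v ≡ e₁ mod I`)
satisfies `v = e₁ · β` for some `β ∈ E_n(R, I)`, for `n ≥ 2`. -/
theorem unimodular_relative_elementary_orbit {n : ℕ} {R : Type*} [CommRing R]
    [IsLocalRing R] (hn : 2 ≤ n) (I : Ideal R) (v : Fin n → R)
    (hunim : ∃ w, v ⬝ᵥ w = 1)
    (hcong0 : v ⟨0, by omega⟩ - 1 ∈ I)
    (hcong : ∀ k : Fin n, k ≠ ⟨0, by omega⟩ → v k ∈ I) :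
    ∃ β ∈ elemRel (m := n) I,
      Matrix.vecMul (Pi.single (⟨0, by omega⟩ : Fin n) 1)
        (β : Matrix (Fin n) (Fin n) R) = v := by
  obtain ⟨w, hw⟩ := hunim
  set i0 : Fin n := ⟨0, by omega⟩ with hi0def
  set i1 : Fin n := ⟨1, by omega⟩ with hi1def
  have hi01 : i0 ≠ i1 := by simp [hi0def, hi1def, Fin.ext_iff]
  set e : Fin n → R := Pi.single i0 1 with hedef
  have he0 : e i0 = 1 := Pi.single_eq_same i0 1
  have he1 : e i1 = 0 := Pi.single_eq_of_ne hi01.symm 1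
  by_cases hv0 : IsUnit (v i0)
  · -- Case A : `v i0` is a unit.
    obtain ⟨u, hu⟩ := hv0
    set a : R := v i0 - 1 with hadef
    have ha : a ∈ I := hcong0
    have hva : v i0 = 1 + a := by rw [hadef]; ring
    set G := elemMat i1 i0 hi01.symm (-1 : R) with hGdef
    set H := elemMat i0 i1 hi01 a with hHdef
    set C0 := elemMat i0 i1 hi01 (-((↑u⁻¹ : R) * a)) with hC0def
    set C := elemRow i0 (fun j => (↑u⁻¹ : R) * v j) with hCdef
    refine ⟨G * H * G⁻¹ * C0 * C, ?_, ?_⟩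
    · refine mul_mem (mul_mem (conj_mem_elemRel I (elemMat_mem _ _ _ (Set.mem_univ _))
        (elemMat_mem _ _ _ ha)) (elemSub_le_elemRel I (elemMat_mem _ _ _ ?_)))
        (elemSub_le_elemRel I (elemRow_mem _ _ ?_))
      · exact neg_mem (I.mul_mem_left _ ha)
      · intro j hj
        exact I.mul_mem_left _ (hcong j hj)
    · rw [Units.val_mul, Units.val_mul, Units.val_mul, Units.val_mul,
        ← Matrix.vecMul_vecMul, ← Matrix.vecMul_vecMul, ← Matrix.vecMul_vecMul,
        ← Matrix.vecMul_vecMul]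
      have s1 : Matrix.vecMul e (G : Matrix (Fin n) (Fin n) R) = e := by
        rw [hGdef, vecMul_elemMat, he1]
        simp
      have s2 : Matrix.vecMul e (H : Matrix (Fin n) (Fin n) R) =
          e + a • (Pi.single i1 1 : Fin n → R) := by
        rw [hHdef, vecMul_elemMat, he0, one_mul]
      have hGinv : (G⁻¹ : (Matrix (Fin n) (Fin n) R)ˣ) = elemMat i1 i0 hi01.symm 1 := by
        rw [hGdef, elemMat_inv, neg_neg]
      set w2 : Fin n → R := e + a • (Pi.single i1 1 : Fin n → R) with hw2def
      have hw2i1 : w2 i1 = a := by simp [hw2def, he1]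
      have hw2i0 : w2 i0 = 1 := by
        simp [hw2def, he0, Pi.single_eq_of_ne hi01]
      have s3 : Matrix.vecMul w2 ((G⁻¹ : (Matrix (Fin n) (Fin n) R)ˣ) :
          Matrix (Fin n) (Fin n) R) = w2 + a • (Pi.single i0 1 : Fin n → R) := by
        rw [hGinv, vecMul_elemMat, hw2i1, mul_one]
      set w3 : Fin n → R := w2 + a • (Pi.single i0 1 : Fin n → R) with hw3def
      have hw3i0 : w3 i0 = 1 + a := by simp [hw3def, hw2i0]
      have s4 : Matrix.vecMul w3 ((C0 : (Matrix (Fin n) (Fin n) R)ˣ) :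
          Matrix (Fin n) (Fin n) R) = e + a • (Pi.single i0 1 : Fin n → R) := by
        rw [hC0def, vecMul_elemMat, hw3i0]
        have : (1 + a) * -((↑u⁻¹ : R) * a) = -a := by
          rw [← hva, ← hu, mul_neg, ← mul_assoc, Units.mul_inv, one_mul]
        rw [this, hw3def, hw2def]
        funext k
        simp
        ring
      rw [s1, s2, s3, s4]
      set w4 : Fin n → R := e + a • (Pi.single i0 1 : Fin n → R) with hw4def
      have hw4i0 : w4 i0 = 1 + a := by simp [hw4def, he0]
      rw [hCdef, vecMul_elemRow]
      funext k
      by_cases hk : k = i0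
      · subst hk
        rw [if_pos rfl, hw4i0, ← hva]
      · rw [if_neg hk]
        have hw4k : w4 k = 0 := by
          simp [hw4def, Pi.single_eq_of_ne hk, hedef]
        rw [hw4k, hw4i0, ← hva, ← hu, zero_add, ← mul_assoc, Units.mul_inv, one_mul]
  · -- Case B : `v i0` is not a unit; then some other coordinate is, and `I = ⊤`.
    have hex : ∃ k : Fin n, IsUnit (v k) := by
      by_contra hno
      push_neg at hno
      have hmem : ∀ k : Fin n, v k ∈ IsLocalRing.maximalIdeal R := fun k =>
        (IsLocalRing.mem_maximalIdeal _).2 (mem_nonunits_iff.2 (hno k))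
      have : (1 : R) ∈ IsLocalRing.maximalIdeal R := by
        rw [← hw]
        exact Submodule.sum_mem _ fun i _ => Ideal.mul_mem_right _ _ (hmem i)
      exact (IsLocalRing.maximalIdeal.isMaximal R).ne_top (Ideal.eq_top_of_isUnit_mem _ this
        isUnit_one)
    obtain ⟨k, hk⟩ := hex
    have hki0 : k ≠ i0 := fun e => hv0 (e ▸ hk)
    have hIT : I = ⊤ := Ideal.eq_top_of_isUnit_mem _ (hcong k hki0) hk
    obtain ⟨uk, huk⟩ := hk
    set K := elemMat k i0 hki0 ((↑uk⁻¹ : R) * (v i0 - 1)) with hKdef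
    set C := elemRow i0 v with hCdef
    refine ⟨C * K, ?_, ?_⟩
    · refine mul_mem (elemSub_le_elemRel I (elemRow_mem _ _ fun j _ => ?_))
        (elemSub_le_elemRel I (elemMat_mem _ _ _ ?_))
      · simp [hIT]
      · simp [hIT]
    · rw [Units.val_mul, ← Matrix.vecMul_vecMul, hCdef, vecMul_elemRow]
      set w1 : Fin n → R := fun j => if j = i0 then e i0 else e j + e i0 * v j with hw1def
      have hw1i0 : w1 i0 = 1 := by simp [hw1def, he0]
      have hw1 : ∀ j, j ≠ i0 → w1 j = v j := by
        intro j hj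
        simp [hw1def, hj, he0, Pi.single_eq_of_ne hj, hedef]
      rw [hKdef, vecMul_elemMat, hw1 k hki0]
      funext j
      by_cases hj : j = i0
      · subst hj
        rw [Pi.add_apply, hw1i0]
        simp only [Pi.smul_apply, Pi.single_eq_same, smul_eq_mul, mul_one]
        rw [← huk, ← mul_assoc, Units.mul_inv, one_mul]
        ring
      · rw [Pi.add_apply, hw1 j hj]
        simp [Pi.single_eq_of_ne hj]
end
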